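/- For the error monad transformer, the map λ m. bindET m unitET is a deflation: it is continuous, idempotent, and below the identity. -/

import Mathlib

open OmegaCompletePartialOrder

/-- The pre-2025 Mathlib notion `OmegaCompletePartialOrder.Continuous'` (removed since):
`f` is monotone and preserves `ωSup` of chains. -/
def OmegaCompletePartialOrder.Continuous' {α β : Type*} [OmegaCompletePartialOrder α]
    [OmegaCompletePartialOrder β] (f : α → β) : Prop :=
  ∃ hf : Monotone f, ∀ c : Chain α, f (ωSup c) = ωSup (c.map ⟨f, hf⟩)

universe u

/-- The error type `Error ε α` as a flat domain with bottom, `Err`, and `Ok`. -/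
inductive ErrorV (ε α : Type u) : Type u
  | bot : ErrorV ε α
  | err : ε → ErrorV ε α
  | ok : α → ErrorV ε α

/-- Flat order on `ErrorV`. -/
instance {ε α : Type u} : PartialOrder (ErrorV ε α) where
  le x y := x = ErrorV.bot ∨ x = y
  le_refl _ := Or.inr rfl
  le_trans x y z h1 h2 := by rcases h1 with h | h <;> rcases h2 with h' | h' <;> simp_all
  le_antisymm x y h1 h2 := by rcases h1 with h | h <;> rcases h2 with h' | h' <;> simp_all

instance {ε α : Type u} : OrderBot (ErrorV ε α) where
  bot := ErrorV.bot
  bot_le _ := Or.inl rfl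

/-- The strict case analysis `R(k)` used in the definition of `bindET`. -/
def Rfun {T : Type u → Type u}
    [∀ γ, OmegaCompletePartialOrder (T γ)] [∀ γ, OrderBot (T γ)]
    (ret : ∀ {γ : Type u}, γ → T γ)
    {ε α δ : Type u} (k : α → T (ErrorV ε δ)) :
    ErrorV ε α → T (ErrorV ε δ)
  | ErrorV.bot => ⊥
  | ErrorV.err e => ret (ErrorV.err e)
  | ErrorV.ok a => k a

/-- Bind of the error monad transformer: `bindET m k = m >>=τ R(k)`. -/
def bindET {T : Type u → Type u}
    [∀ γ, OmegaCompletePartialOrder (T γ)] [∀ γ, OrderBot (T γ)]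
    (ret : ∀ {γ : Type u}, γ → T γ)
    (bind : ∀ {γ δ : Type u}, T γ → (γ → T δ) → T δ)
    {ε α δ : Type u} (m : T (ErrorV ε α)) (k : α → T (ErrorV ε δ)) :
    T (ErrorV ε δ) :=
  bind m (Rfun ret k)

/-- For the error monad transformer, `fun m => bindET m unitET` is a deflation:
continuous, idempotent, and below the identity. -/
theorem bindET_unitET_deflation {T : Type u → Type u}
    [∀ γ, OmegaCompletePartialOrder (T γ)] [∀ γ, OrderBot (T γ)]
    (ret : ∀ {γ : Type u}, γ → T γ)
    (bind : ∀ {γ δ : Type u}, T γ → (γ → T δ) → T δ)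
    (hleft : ∀ {γ δ : Type u} (a : γ) (k : γ → T δ), bind (ret a) k = k a)
    (hright : ∀ {γ : Type u} (m : T γ), bind m ret = m)
    (hassoc : ∀ {γ δ φ : Type u} (m : T γ) (h : γ → T δ) (k : δ → T φ),
        bind (bind m h) k = bind m fun x => bind (h x) k)
    (hstrict : ∀ {γ δ : Type u} [PartialOrder γ] [OrderBot γ] (k : γ → T δ),
        k ⊥ = ⊥ → bind (⊥ : T γ) k = ⊥)
    (hcont : ∀ {γ δ : Type u} (k : γ → T δ),
        OmegaCompletePartialOrder.Continuous' (fun m => bind m k))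
    (hmono₂ : ∀ {γ δ : Type u} (m : T γ) (k₁ k₂ : γ → T δ),
        (∀ x, k₁ x ≤ k₂ x) → bind m k₁ ≤ bind m k₂)
    {ε α : Type u} :
    OmegaCompletePartialOrder.Continuous'
      (fun m : T (ErrorV ε α) =>
        bindET (fun {_} a => ret a) (fun {_ _} m k => bind m k) m
          (fun a => ret (ErrorV.ok a))) ∧
    (∀ m : T (ErrorV ε α),
        bindET (fun {_} a => ret a) (fun {_ _} m k => bind m k)
            (bindET (fun {_} a => ret a) (fun {_ _} m k => bind m k) m
              (fun a => ret (ErrorV.ok a)))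
            (fun a => ret (ErrorV.ok a))
          = bindET (fun {_} a => ret a) (fun {_ _} m k => bind m k) m
              (fun a => ret (ErrorV.ok a))) ∧
    (∀ m : T (ErrorV ε α),
        bindET (fun {_} a => ret a) (fun {_ _} m k => bind m k) m
          (fun a => ret (ErrorV.ok a)) ≤ m) := by
  refine ⟨hcont _, ?_, ?_⟩
  · intro m
    unfold bindET
    beta_reduce
    rw [hassoc]
    congr 1
    funext x
    cases x with
    | bot => exact hstrict _ (by with_unfolding_all rfl)
    | err e => simp [Rfun, hleft]
    | ok a => simp [Rfun, hleft]
  · intro m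
    unfold bindET
    conv_rhs => rw [← hright m]
    apply hmono₂
    intro x
    cases x with
    | bot => exact bot_le
    | err e => exact le_refl _
    | ok a => exact le_refl _
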